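/- arXiv:2409.18269 — 3 statements merged into one kernel-verified Lean document; each statement's English description precedes it below -/
import Mathlib

section
/- For any integer N ≥ 2, the function f(x) = (1 - x^N) / (2 - x) satisfies f(x) ≥ 1/2 for all x in the interval [0, 1 - 1/N]. -/
theorem stmt_0 (N : ℕ) (hN : 2 ≤ N) (x : ℝ) (hx0 : 0 ≤ x) (hx1 : x ≤ 1 - 1 / N) :
    (1 - x ^ N) / (2 - x) ≥ 1 / 2 := by
  have hN1 : (1 : ℝ) ≤ (N : ℝ) - 1 := by
    have : (2 : ℝ) ≤ N := by exact_mod_cast hN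
    linarith
  have hNpos : (0 : ℝ) < N := by linarith
  have hx1' : x < 1 := by
    have : (0:ℝ) < 1 / N := by positivity
    linarith
  have hb : (0 : ℝ) < 2 - x := by linarith
  -- Bernoulli : (1 + 1/(N-1))^(N-1) ≥ 2
  have hbern : (2 : ℝ) ≤ (1 + 1 / ((N : ℝ) - 1)) ^ (N - 1) := by
    have h := one_add_mul_le_pow (a := 1 / ((N : ℝ) - 1)) (by nlinarith [one_div_pos.mpr (by linarith : (0:ℝ) < (N:ℝ)-1)] : (-2:ℝ) ≤ 1 / ((N:ℝ)-1)) (N - 1)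
    have hcast : ((N - 1 : ℕ) : ℝ) = (N : ℝ) - 1 := by
      push_cast [Nat.cast_sub (by omega : 1 ≤ N)]; ring
    rw [hcast] at h
    have : ((N : ℝ) - 1) * (1 / ((N : ℝ) - 1)) = 1 := by
      field_simp
    nlinarith
  have hkey : (1 - 1 / (N : ℝ)) ^ (N - 1) ≤ 1 / 2 := by
    have heq : (1 - 1 / (N : ℝ)) = 1 / (1 + 1 / ((N : ℝ) - 1)) := by
      field_simp
      ring
    rw [heq, div_pow, one_pow]
    rw [div_le_div_iff₀ (by positivity) (by norm_num)]
    linarith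
  have hxpow : x ^ (N - 1) ≤ 1 / 2 :=
    le_trans (pow_le_pow_left₀ hx0 hx1 _) hkey
  have h2 : 2 * x ^ N ≤ x := by
    have hNe : N = (N - 1) + 1 := by omega
    calc 2 * x ^ N = 2 * x ^ (N - 1) * x := by
          conv_lhs => rw [hNe, pow_succ]
          ring
      _ ≤ 2 * (1/2) * x := by
        apply mul_le_mul_of_nonneg_right _ hx0
        linarith
      _ = x := by ring
  rw [ge_iff_le, le_div_iff₀ hb]
  linarith
end

section
/- Let X_1, ..., X_N be independent real-valued random variables, T ∈ ℝ, and for each i let t_i ≤ T with 0 ≤ t_i. Suppose for each i: E[(X_i - t_i)^+] ≤ (T - t_i)(1 - H_i(t_i)) where H_i(t_i) = P(X_i ≤ t_i). Let I be an index maximizing t_i. Then E[max_i X_i] ≤ t_I · H_I(t_I) + ∑_i T · (1 - H_i(t_i)). -/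
open MeasureTheory

theorem stmt_6 {Ω : Type*} [MeasurableSpace Ω] {μ : Measure Ω} [IsProbabilityMeasure μ]
    (N : ℕ) (hN : 0 < N) (X : Fin N → Ω → ℝ)
    (hmeas : ∀ i, Measurable (X i))
    (hint : ∀ i, Integrable (X i) μ)
    (hindep : ProbabilityTheory.iIndepFun X μ)
    (T : ℝ) (t : Fin N → ℝ) (ht0 : ∀ i, 0 ≤ t i) (htT : ∀ i, t i ≤ T)
    (hcond : ∀ i, ∫ ω, max (X i ω - t i) 0 ∂μ ≤
      (T - t i) * (1 - (μ {ω | X i ω ≤ t i}).toReal))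
    (I : Fin N) (hI : ∀ i, t i ≤ t I) :
    ∫ ω, Finset.univ.sup' (Finset.univ_nonempty_iff.mpr (Fin.pos_iff_nonempty.mp hN))
        (fun i => X i ω) ∂μ ≤
      t I * (μ {ω | X I ω ≤ t I}).toReal +
        ∑ i, T * (1 - (μ {ω | X i ω ≤ t i}).toReal) := by
  have hne : (Finset.univ : Finset (Fin N)).Nonempty :=
    Finset.univ_nonempty_iff.mpr (Fin.pos_iff_nonempty.mp hN)
  set H : Fin N → ℝ := fun i => (μ {ω | X i ω ≤ t i}).toReal with hHdef
  have hH0 : ∀ i, 0 ≤ H i := fun i => ENNReal.toReal_nonneg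
  have hH1 : ∀ i, H i ≤ 1 := by
    intro i
    exact ENNReal.toReal_le_of_le_ofReal zero_le_one (by simpa using prob_le_one)
  -- positive parts are integrable
  have hposint : ∀ i, Integrable (fun ω => max (X i ω - t i) 0) μ :=
    fun i => ((hint i).sub (integrable_const (t i))).pos_part
  -- the sup is integrable
  have hgmeas : Measurable (fun ω => Finset.univ.sup' hne (fun i => X i ω)) := by
    have h := Finset.measurable_sup' hne (fun i (_ : i ∈ Finset.univ) => hmeas i)
    have heq : Finset.univ.sup' hne X = fun ω => Finset.univ.sup' hne fun i => X i ω := by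
      funext ω; exact Finset.sup'_apply hne X ω
    exact heq ▸ h
  have hgint : Integrable (fun ω => Finset.univ.sup' hne (fun i => X i ω)) μ := by
    refine Integrable.mono' (g := fun ω => ∑ i, |X i ω|)
      (integrable_finset_sum _ fun i _ => (hint i).abs) hgmeas.aestronglyMeasurable ?_
    filter_upwards with ω
    rw [Real.norm_eq_abs, abs_le]
    constructor
    · obtain ⟨j, _⟩ := hne
      calc -(∑ i, |X i ω|) ≤ -|X j ω| := by
            simp only [neg_le_neg_iff]
            exact Finset.single_le_sum (f := fun i => |X i ω|)
              (fun i _ => abs_nonneg _) (Finset.mem_univ j)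
        _ ≤ X j ω := neg_abs_le _
        _ ≤ _ := Finset.le_sup' (fun i => X i ω) (Finset.mem_univ j)
    · apply Finset.sup'_le
      intro j _
      exact le_trans (le_abs_self _)
        (Finset.single_le_sum (f := fun i => |X i ω|)
          (fun i _ => abs_nonneg _) (Finset.mem_univ j))
  -- pointwise bound
  have hpt : ∀ ω, Finset.univ.sup' hne (fun i => X i ω) ≤
      t I + ∑ i, max (X i ω - t i) 0 := by
    intro ω
    apply Finset.sup'_le
    intro j _
    have h1 : X j ω ≤ t j + max (X j ω - t j) 0 := by
      have := le_max_left (X j ω - t j) 0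
      linarith
    have h2 : max (X j ω - t j) 0 ≤ ∑ i, max (X i ω - t i) 0 :=
      Finset.single_le_sum (f := fun i => max (X i ω - t i) 0)
        (fun i _ => le_max_right _ _) (Finset.mem_univ j)
    linarith [hI j]
  -- integral bound step 1
  have step1 : ∫ ω, Finset.univ.sup' hne (fun i => X i ω) ∂μ ≤
      t I + ∑ i, ∫ ω, max (X i ω - t i) 0 ∂μ := by
    have : ∫ ω, Finset.univ.sup' hne (fun i => X i ω) ∂μ ≤
        ∫ ω, (t I + ∑ i, max (X i ω - t i) 0) ∂μ := by
      apply integral_mono hgint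
        ((integrable_const (t I)).add (integrable_finset_sum _ fun i _ => hposint i))
      exact hpt
    rwa [integral_add (integrable_const _) (integrable_finset_sum _ fun i _ => hposint i),
      integral_const, integral_finset_sum _ (fun i _ => hposint i), probReal_univ,
      smul_eq_mul, one_mul] at this
  have step2 : ∫ ω, Finset.univ.sup' hne (fun i => X i ω) ∂μ ≤
      t I + ∑ i, (T - t i) * (1 - H i) :=
    step1.trans (by gcongr with i _; exact hcond i)
  refine step2.trans ?_
  -- final algebraic step
  have key : t I * (1 - H I) ≤ ∑ i, t i * (1 - H i) :=
    Finset.single_le_sum (f := fun i => t i * (1 - H i))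
      (fun i _ => mul_nonneg (ht0 i) (by linarith [hH1 i])) (Finset.mem_univ I)
  have expand : ∑ i, (T - t i) * (1 - H i)
      = ∑ i, T * (1 - H i) - ∑ i, t i * (1 - H i) := by
    rw [← Finset.sum_sub_distrib]
    congr 1; ext i; ring
  rw [expand]
  have : t I = t I * H I + t I * (1 - H I) := by ring
  linarith
end

section
/- Let f_1, ..., f_N: [0,1] → ℝ be twice differentiable positive log-concave probability density functions with CDFs H_1, ..., H_N (each positive on (0,1]), satisfying f_i(1) ≥ α > 0 and f_i'(1) ≥ -β for all i, and N ≥ 1 + β/α². Then for each i and every x ∈ (0,1]: f_i'(x)/f_i(x) + ∑_{j ≠ i} f_j(x)/H_j(x) ≥ 0. -/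
open Set intervalIntegral

/-- Rearrangement inequality for concave functions: if `a ≤ c ≤ b` then
`φ a + φ b ≤ φ c + φ (a + b - c)`. -/
lemma concave_rearrange {S : Set ℝ} {φ : ℝ → ℝ} (hφ : ConcaveOn ℝ S φ)
    {a b c : ℝ} (ha : a ∈ S) (hb : b ∈ S) (hac : a ≤ c) (hcb : c ≤ b) :
    φ a + φ b ≤ φ c + φ (a + b - c) := by
  rcases eq_or_lt_of_le (hac.trans hcb) with h | hab
  · have hca : c = a := le_antisymm (h ▸ hcb) hac
    subst hca
    have : c + b - c = b := by ring
    rw [this]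
  · set t : ℝ := (b - c) / (b - a) with ht
    have hba : (0:ℝ) < b - a := by linarith
    have ht0 : 0 ≤ t := div_nonneg (by linarith) hba.le
    have ht1 : 0 ≤ 1 - t := by
      rw [ht, sub_nonneg, div_le_one hba]; linarith
    have h1 := hφ.2 ha hb ht0 ht1 (by ring)
    have h2 := hφ.2 ha hb ht1 ht0 (by ring)
    have e1 : t • a + (1 - t) • b = c := by
      simp only [smul_eq_mul]; rw [ht]; field_simp <;> ring
    have e2 : (1 - t) • a + t • b = a + b - c := by
      simp only [smul_eq_mul]; rw [ht]; field_simp <;> ring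
    rw [e1] at h1
    rw [e2] at h2
    simp only [smul_eq_mul] at h1 h2
    nlinarith [h1, h2]

theorem stmt_11 (N : ℕ) (f f' H : Fin N → ℝ → ℝ) (α β : ℝ)
    (hα : 0 < α)
    (hfpos : ∀ i, ∀ x ∈ Set.Icc (0 : ℝ) 1, 0 < f i x)
    (hHpos : ∀ i, ∀ x ∈ Set.Ioc (0 : ℝ) 1, 0 < H i x)
    (hderiv : ∀ i, ∀ x ∈ Set.Icc (0 : ℝ) 1, HasDerivAt (f i) (f' i x) x)
    (hcdf : ∀ i, ∀ x ∈ Set.Icc (0 : ℝ) 1, H i x = ∫ s in (0 : ℝ)..x, f i s)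
    (hpdf : ∀ i, ∫ s in (0 : ℝ)..1, f i s = 1)
    (hlogconc_f : ∀ i, ConcaveOn ℝ (Set.Icc (0 : ℝ) 1) (fun x => Real.log (f i x)))
    (hf1 : ∀ i, α ≤ f i 1)
    (hf'1 : ∀ i, -β ≤ f' i 1)
    (hNbig : (1 : ℝ) + β / α ^ 2 ≤ N) :
    ∀ i, ∀ x ∈ Set.Ioc (0 : ℝ) 1,
      0 ≤ f' i x / f i x + ∑ j ∈ Finset.univ \ {i}, f j x / H j x := by
  intro i x hx
  obtain ⟨hx0, hx1⟩ := hx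
  have hxI : x ∈ Icc (0:ℝ) 1 := ⟨hx0.le, hx1⟩
  have h1I : (1:ℝ) ∈ Icc (0:ℝ) 1 := by norm_num
  have hf1pos : ∀ j, 0 < f j 1 := fun j => hfpos j 1 h1I
  -- Step 1 : f'/f is at least its value at 1
  have hstep1 : ∀ j, f' j 1 / f j 1 ≤ f' j x / f j x := by
    intro j
    have hL : ∀ y ∈ Icc (0:ℝ) 1,
        HasDerivAt (fun z => Real.log (f j z)) (f' j y / f j y) y := by
      intro y hy
      exact (hderiv j y hy).log (hfpos j y hy).ne'
    rcases eq_or_lt_of_le hx1 with h | hlt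
    · rw [h]
    · have ha := (hlogconc_f j).le_slope_of_hasDerivAt hxI h1I hlt (hL 1 h1I)
      have hb := (hlogconc_f j).slope_le_of_hasDerivAt hxI h1I hlt (hL x hxI)
      exact ha.trans hb
  -- continuity of each f j on [0,1]
  have hcont : ∀ j, ContinuousOn (f j) (Icc (0:ℝ) 1) := fun j y hy =>
    (hderiv j y hy).continuousAt.continuousWithinAt
  -- Step 2 : each f j x / H j x ≥ α
  have key : ∀ j, α ≤ f j x / H j x := by
    intro j
    have hHx : 0 < H j x := hHpos j x ⟨hx0, hx1⟩
    -- pointwise inequality for s ∈ [0,x]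
    have hpt : ∀ s ∈ Icc (0:ℝ) x, f j 1 * f j s ≤ f j x * f j (s + (1 - x)) := by
      intro s hs
      obtain ⟨hs0, hsx⟩ := hs
      have hsI : s ∈ Icc (0:ℝ) 1 := ⟨hs0, hsx.trans hx1⟩
      have hdI : s + (1 - x) ∈ Icc (0:ℝ) 1 := ⟨by linarith, by linarith⟩
      have hre := concave_rearrange (hlogconc_f j) hsI h1I (hsx) hx1
      have hre' : Real.log (f j s) + Real.log (f j 1) ≤
          Real.log (f j x) + Real.log (f j (s + (1 - x))) := by
        have : s + 1 - x = s + (1 - x) := by ring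
        rwa [this] at hre
      have hl : Real.log (f j s * f j 1) ≤ Real.log (f j x * f j (s + (1 - x))) := by
        rw [Real.log_mul (hfpos j s hsI).ne' (hf1pos j).ne',
            Real.log_mul (hfpos j x hxI).ne' (hfpos j _ hdI).ne']
        exact hre'
      have := (Real.log_le_log_iff (mul_pos (hfpos j s hsI) (hf1pos j))
        (mul_pos (hfpos j x hxI) (hfpos j _ hdI))).mp hl
      linarith [this]
    -- integrability
    have hint1 : IntervalIntegrable (fun s => f j 1 * f j s) MeasureTheory.volume 0 x := by
      apply ContinuousOn.intervalIntegrable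
      rw [uIcc_of_le hx0.le]
      exact (continuousOn_const.mul ((hcont j).mono (Icc_subset_Icc le_rfl hx1)))
    have hint2 : IntervalIntegrable (fun s => f j x * f j (s + (1 - x)))
        MeasureTheory.volume 0 x := by
      apply ContinuousOn.intervalIntegrable
      rw [uIcc_of_le hx0.le]
      apply continuousOn_const.mul
      apply (hcont j).comp (continuous_add_right (1 - x)).continuousOn
      intro s hs
      show s + (1 - x) ∈ Icc (0:ℝ) 1
      exact ⟨by linarith [hs.1], by linarith [hs.2]⟩
    have hmono := intervalIntegral.integral_mono_on hx0.le hint1 hint2 hpt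
    rw [intervalIntegral.integral_const_mul, intervalIntegral.integral_const_mul] at hmono
    have hcomp : ∫ s in (0:ℝ)..x, f j (s + (1 - x)) = ∫ s in (1-x)..1, f j s := by
      rw [intervalIntegral.integral_comp_add_right]
      norm_num
    rw [hcomp] at hmono
    -- ∫_{1-x}^1 f ≤ 1
    have hintA : IntervalIntegrable (f j) MeasureTheory.volume 0 (1-x) := by
      apply ContinuousOn.intervalIntegrable
      rw [uIcc_of_le (by linarith)]
      exact (hcont j).mono (Icc_subset_Icc le_rfl (by linarith))
    have hintB : IntervalIntegrable (f j) MeasureTheory.volume (1-x) 1 := by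
      apply ContinuousOn.intervalIntegrable
      rw [uIcc_of_le (by linarith)]
      exact (hcont j).mono (Icc_subset_Icc (by linarith) le_rfl)
    have hsplit := intervalIntegral.integral_add_adjacent_intervals hintA hintB
    have hnn : 0 ≤ ∫ s in (0:ℝ)..(1-x), f j s := by
      apply intervalIntegral.integral_nonneg (by linarith)
      intro u hu
      exact (hfpos j u ⟨hu.1, by linarith [hu.2]⟩).le
    have htail : (∫ s in (1-x)..1, f j s) ≤ 1 := by
      have := hpdf j
      linarith [hsplit, hnn, this]
    have hfx : 0 < f j x := hfpos j x hxI
    have hHxval : H j x = ∫ s in (0:ℝ)..x, f j s := hcdf j x hxI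
    have hkey : f j 1 * H j x ≤ f j x := by
      calc f j 1 * H j x = f j 1 * ∫ s in (0:ℝ)..x, f j s := by rw [hHxval]
        _ ≤ f j x * ∫ s in (1-x)..1, f j s := hmono
        _ ≤ f j x * 1 := by
            exact mul_le_mul_of_nonneg_left htail hfx.le
        _ = f j x := mul_one _
    rw [le_div_iff₀ hHx]
    calc α * H j x ≤ f j 1 * H j x := by
          exact mul_le_mul_of_nonneg_right (hf1 j) hHx.le
      _ ≤ f j x := hkey
  -- Step 3 : sum bound
  rcases le_or_gt β 0 with hβ | hβ
  · -- f' i 1 ≥ -β ≥ 0, everything nonnegative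
    have h1 : 0 ≤ f' i 1 / f i 1 := div_nonneg (by linarith [hf'1 i]) (hf1pos i).le
    have h2 : 0 ≤ f' i x / f i x := le_trans h1 (hstep1 i)
    have h3 : 0 ≤ ∑ j ∈ Finset.univ \ {i}, f j x / H j x :=
      Finset.sum_nonneg fun j _ => (div_pos (hfpos j x hxI) (hHpos j x ⟨hx0, hx1⟩)).le
    linarith
  · -- β > 0
    have hN1 : 1 ≤ N := by
      have hq : 0 < β / α ^ 2 := div_pos hβ (pow_pos hα 2)
      have : (1:ℝ) ≤ (N:ℝ) := by linarith
      exact_mod_cast this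
    have hcard : ((Finset.univ \ {i} : Finset (Fin N)).card : ℝ) = (N:ℝ) - 1 := by
      rw [Finset.card_sdiff_of_subset (Finset.subset_univ _)]
      simp [Nat.cast_sub hN1]
    have hsum : ((N:ℝ) - 1) * α ≤ ∑ j ∈ Finset.univ \ {i}, f j x / H j x := by
      have := Finset.card_nsmul_le_sum (Finset.univ \ {i})
        (fun j => f j x / H j x) α (fun j _ => key j)
      rwa [nsmul_eq_mul, hcard] at this
    have hA : -β / α ≤ -β / f i 1 := by
      rw [div_le_div_iff₀ hα (hf1pos i)]
      nlinarith [hf1 i]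
    have hB : -β / f i 1 ≤ f' i 1 / f i 1 :=
      (div_le_div_iff_of_pos_right (hf1pos i)).mpr (hf'1 i)
    have hC : -(β / α) ≤ f' i x / f i x := by
      rw [← neg_div]
      exact hA.trans (hB.trans (hstep1 i))
    have hD : β ≤ ((N:ℝ) - 1) * α ^ 2 := by
      have h := (div_le_iff₀ (pow_pos hα 2)).mp (by linarith : β / α ^ 2 ≤ (N:ℝ) - 1)
      linarith
    have hE : β / α ≤ ((N:ℝ) - 1) * α := by
      rw [div_le_iff₀ hα]
      nlinarith [hD]
    linarith [hC, hsum, hE]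
end
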